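/- arXiv:2104.11519 — 7 statements merged into one kernel-verified Lean document; each statement's English description precedes it below -/
import Mathlib

section
/- Let X be a Banach space, Q : X** → X** a bounded linear projection with range κ_X(X) (the canonical image of X) such that ‖f‖ > ‖f - Q f‖ for every f ∈ X** not in ker Q. If a group G acts on X by (affine) isometries with linear parts π(g), then the dual-dual extensions π(g) : X** → X** map ker Q into ker Q. -/
open NormedSpace

/-- The transpose (adjoint) of a continuous linear map between normed spaces. -/
noncomputable def clmTranspose {E F : Type*} [NormedAddCommGroup E] [NormedSpace ℝ E]
    [NormedAddCommGroup F] [NormedSpace ℝ F] (A : E →L[ℝ] F) :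
    StrongDual ℝ F →L[ℝ] StrongDual ℝ E :=
  (ContinuousLinearMap.compL ℝ E F ℝ).flip A

lemma clmTranspose_apply {E F : Type*} [NormedAddCommGroup E] [NormedSpace ℝ E]
    [NormedAddCommGroup F] [NormedSpace ℝ F] (A : E →L[ℝ] F) (φ : StrongDual ℝ F) :
    clmTranspose A φ = φ.comp A := rfl

lemma clmTranspose_norm_le {E F : Type*} [NormedAddCommGroup E] [NormedSpace ℝ E]
    [NormedAddCommGroup F] [NormedSpace ℝ F] (A : E →L[ℝ] F) (hA : ∀ x, ‖A x‖ = ‖x‖) :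
    ‖clmTranspose A‖ ≤ 1 := by
  refine ContinuousLinearMap.opNorm_le_bound _ zero_le_one (fun φ => ?_)
  rw [one_mul]
  refine ContinuousLinearMap.opNorm_le_bound _ (norm_nonneg φ) (fun x => ?_)
  calc ‖(clmTranspose A φ) x‖ = ‖φ (A x)‖ := rfl
  _ ≤ ‖φ‖ * ‖A x‖ := φ.le_opNorm _
  _ = ‖φ‖ * ‖x‖ := by rw [hA]

/-- Let `X` be a Banach space and `Q : X** → X**` a bounded linear projection with range
`κ_X(X)` such that `‖f‖ > ‖f − Qf‖` for every `f ∉ ker Q`.  If a group `G` acts on `X` by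
affine isometries with linear parts `π(g) x = g•x − g•0`, then the double-dual extensions
`π(g)** : X** → X**` map `ker Q` into `ker Q`. -/
theorem stmt_0 {X : Type*} [NormedAddCommGroup X] [NormedSpace ℝ X] [CompleteSpace X]
    {G : Type*} [Group G] [MulAction G X]
    (hiso : ∀ g : G, Isometry (fun x : X => g • x))
    (π : G → X →L[ℝ] X) (hπ : ∀ (g : G) (x : X), π g x = g • x - g • (0 : X))
    (Q : StrongDual ℝ (StrongDual ℝ X) →L[ℝ] StrongDual ℝ (StrongDual ℝ X))
    (hproj : ∀ f, Q (Q f) = Q f)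
    (hrange : Set.range Q = Set.range (inclusionInDoubleDual ℝ X))
    (hstrict : ∀ f, Q f ≠ 0 → ‖f - Q f‖ < ‖f‖) :
    ∀ (g : G) (f : StrongDual ℝ (StrongDual ℝ X)),
      Q f = 0 → Q (clmTranspose (clmTranspose (π g)) f) = 0 := by
  intro g f hf
  -- norm preservation of the linear parts
  have hnorm : ∀ (h : G) (x : X), ‖π h x‖ = ‖x‖ := by
    intro h x
    calc ‖π h x‖ = dist (h • x) (h • (0 : X)) := by rw [hπ, dist_eq_norm]
    _ = dist x 0 := (hiso h).dist_eq x 0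
    _ = ‖x‖ := by simp
  -- the linear parts compose to the identity
  have hinv1 : ∀ x : X, π g (π g⁻¹ x) = x := by
    intro x
    rw [hπ g⁻¹, map_sub, hπ, hπ]
    simp
  have hinv2 : ∀ x : X, π g⁻¹ (π g x) = x := by
    intro x
    rw [hπ g, map_sub, hπ, hπ]
    simp
  set T₁ := clmTranspose (clmTranspose (π g)) with hT₁
  set T₂ := clmTranspose (clmTranspose (π g⁻¹)) with hT₂
  have hT_apply : ∀ (A : X →L[ℝ] X) (z : StrongDual ℝ (StrongDual ℝ X)) (φ : StrongDual ℝ X),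
      clmTranspose (clmTranspose A) z φ = z (φ.comp A) := fun _ _ _ => rfl
  have hcomp1 : ∀ z, T₁ (T₂ z) = z := by
    intro z
    ext φ
    rw [hT₁, hT₂, hT_apply, hT_apply]
    congr 1
    ext x
    simp [hinv1]
  have hcomp2 : ∀ z, T₂ (T₁ z) = z := by
    intro z
    ext φ
    rw [hT₁, hT₂, hT_apply, hT_apply]
    congr 1
    ext x
    simp [hinv2]
  have hTnorm : ∀ (h : G) (z : StrongDual ℝ (StrongDual ℝ X)),
      ‖clmTranspose (clmTranspose (π h)) z‖ ≤ ‖z‖ := by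
    intro h z
    have h1 : ‖clmTranspose (π h)‖ ≤ 1 := clmTranspose_norm_le _ (hnorm h)
    calc ‖clmTranspose (clmTranspose (π h)) z‖ = ‖z.comp (clmTranspose (π h))‖ := rfl
    _ ≤ ‖z‖ * ‖clmTranspose (π h)‖ := ContinuousLinearMap.opNorm_comp_le _ _
    _ ≤ ‖z‖ * 1 := by gcongr
    _ = ‖z‖ := mul_one _
  have hκ : ∀ (A : X →L[ℝ] X) (x : X),
      clmTranspose (clmTranspose A) (inclusionInDoubleDual ℝ X x)
        = inclusionInDoubleDual ℝ X (A x) := by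
    intro A x
    ext φ
    rfl
  by_contra hQ
  set y := T₂ (Q (T₁ f)) with hy
  -- y lies in the range of the canonical embedding, hence in the range of Q
  obtain ⟨x, hx⟩ : Q (T₁ f) ∈ Set.range (inclusionInDoubleDual ℝ X) := by
    rw [← hrange]; exact ⟨T₁ f, rfl⟩
  have hyκ : y = inclusionInDoubleDual ℝ X (π g⁻¹ x) := by
    rw [hy, ← hx, hT₂, hκ]
  have hyQ : Q y = y := by
    obtain ⟨w, hw⟩ : y ∈ Set.range Q := by rw [hrange]; exact ⟨_, hyκ.symm⟩
    rw [← hw, hproj]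
  have hy0 : y ≠ 0 := by
    intro h0
    apply hQ
    have := hcomp1 (Q (T₁ f))
    rw [← hy, h0, map_zero] at this
    exact this.symm
  have hQ' : Q (f - y) ≠ 0 := by
    rw [show Q (f - y) = Q f - Q y from map_sub Q f y, hf, hyQ]
    intro h
    apply hy0
    have h' : y = -(0 - y) := by abel
    rw [h', h, neg_zero]
  have h1 : ‖(f - y) - Q (f - y)‖ < ‖f - y‖ := hstrict _ hQ'
  have h2 : (f - y) - Q (f - y) = f := by
    rw [show Q (f - y) = Q f - Q y from map_sub Q f y, hf, hyQ]
    abel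
  rw [h2] at h1
  have h3 : ‖f - y‖ ≤ ‖T₁ f - Q (T₁ f)‖ := by
    have h4 : f - y = T₂ (T₁ f - Q (T₁ f)) := by
      rw [map_sub, hcomp2, ← hy]
    rw [h4]
    exact hTnorm g⁻¹ _
  have h5 : ‖T₁ f - Q (T₁ f)‖ < ‖T₁ f‖ := hstrict _ hQ
  have h6 : ‖T₁ f‖ ≤ ‖f‖ := hTnorm g f
  linarith
end

section
/- Let G act by isometries on a pointed metric space (M,d,0) and let M/G be the space of orbit closures with the quotient metric d_{M/G}([Gx],[Gy]) = inf{d(x',y') : x' ∈ closure(Gx), y' ∈ closure(Gy)} and base point [G0]. For a Banach space X, the map Ψ : Lip_0(M/G, X) → Lip_0^G(M, X) given by Ψ(f)(x) = f([Gx]) is a surjective linear isometry onto the space of G-invariant base-point-preserving Lipschitz maps, where the norm is the Lipschitz constant. -/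
open scoped NNReal

private def distSet {M : Type*} [MetricSpace M] (G : Type*) [Group G] [MulAction G M]
    (x y : M) : Set ℝ :=
  (fun p : M × M => dist p.1 p.2) ''
    (closure (MulAction.orbit G x) ×ˢ closure (MulAction.orbit G y))

/-- Let `G` act by isometries on a pointed metric space `M` and let `N = M/G` be the space of
orbit closures with the quotient metric (realized by a surjection `q : M → N` satisfying the
quotient-distance formula), with base point `q base`.  For a normed space `X`, the map
`f ↦ f ∘ q` is a linear bijection from `Lip₀(M/G, X)` onto the `G`-invariant members of
`Lip₀(M, X)` which preserves Lipschitz constants (i.e. it is a surjective linear isometry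
for the Lipschitz norms). -/
theorem stmt_4 {M : Type*} [MetricSpace M] {G : Type*} [Group G] [MulAction G M]
    (hiso : ∀ g : G, Isometry (fun x : M => g • x)) (base : M)
    {N : Type*} [MetricSpace N] (q : M → N) (hq : Function.Surjective q)
    (hdist : ∀ x y : M, dist (q x) (q y) = sInf ((fun p : M × M => dist p.1 p.2) ''
        (closure (MulAction.orbit G x) ×ˢ closure (MulAction.orbit G y))))
    {X : Type*} [NormedAddCommGroup X] [NormedSpace ℝ X] :
    (∀ (f₁ f₂ : N → X) (c : ℝ), (fun x : M => (c • f₁ + f₂) (q x)) = c • (f₁ ∘ q) + f₂ ∘ q) ∧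
    (∀ (f : N → X) (K : ℝ≥0), LipschitzWith K (f ∘ q) ↔ LipschitzWith K f) ∧
    Set.BijOn (fun f : N → X => f ∘ q)
      {f : N → X | f (q base) = 0 ∧ ∃ K : ℝ≥0, LipschitzWith K f}
      {h : M → X | h base = 0 ∧ (∃ K : ℝ≥0, LipschitzWith K h) ∧
        ∀ (g : G) (x : M), h (g • x) = h x} := by
  classical
  have hdist' : ∀ x y : M, dist (q x) (q y) = sInf (distSet G x y) := hdist
  have hmem : ∀ x y : M, dist x y ∈ distSet G x y := fun x y =>
    ⟨(x, y), ⟨subset_closure (MulAction.mem_orbit_self x),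
      subset_closure (MulAction.mem_orbit_self y)⟩, rfl⟩
  have hbdd : ∀ x y : M, BddBelow (distSet G x y) := fun x y =>
    ⟨0, fun r hr => by obtain ⟨p, _, rfl⟩ := hr; exact dist_nonneg⟩
  -- `q` is 1-Lipschitz
  have hq1 : LipschitzWith 1 q := by
    apply LipschitzWith.of_dist_le_mul
    intro x y
    rw [hdist', NNReal.coe_one, one_mul]
    exact csInf_le (hbdd x y) (hmem x y)
  -- `q` is `G`-invariant
  have hqg : ∀ (g : G) (x : M), q (g • x) = q x := by
    intro g x
    apply dist_le_zero.1
    rw [hdist']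
    have h0 : (0 : ℝ) ∈ distSet G (g • x) x := by
      refine ⟨(x, x), ⟨?_, subset_closure (MulAction.mem_orbit_self x)⟩, dist_self x⟩
      exact subset_closure (by simpa using MulAction.mem_orbit (g • x) g⁻¹)
    exact csInf_le (hbdd _ _) h0
  -- invariant continuous maps are constant on orbit closures
  have hconst : ∀ (h : M → X), Continuous h → (∀ (g : G) (x : M), h (g • x) = h x) →
      ∀ x x', x' ∈ closure (MulAction.orbit G x) → h x' = h x := by
    intro h hc hinv x x' hx'
    have hsub : closure (MulAction.orbit G x) ⊆ {y | h y = h x} := by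
      apply closure_minimal
      · rintro y ⟨g, rfl⟩; exact hinv g x
      · exact isClosed_eq hc continuous_const
    exact hsub hx'
  -- key estimate
  have hkey : ∀ (h : M → X) (K : ℝ≥0), LipschitzWith K h → (∀ (g : G) (x : M), h (g • x) = h x) →
      ∀ x y, dist (h x) (h y) ≤ K * dist (q x) (q y) := by
    intro h K hK hinv x y
    rw [hdist']
    have hcont := hK.continuous
    apply le_of_forall_pos_le_add
    intro ε hε
    have hεK : (0 : ℝ) < ε / (K + 1) := by positivity
    obtain ⟨s, hs, hlt⟩ := exists_lt_of_csInf_lt ⟨_, hmem x y⟩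
      (lt_add_of_pos_right (sInf (distSet G x y)) hεK)
    obtain ⟨⟨x', y'⟩, ⟨hx', hy'⟩, rfl⟩ := hs
    have hKnn : (0 : ℝ) ≤ K := K.coe_nonneg
    calc dist (h x) (h y) = dist (h x') (h y') := by
          rw [hconst h hcont hinv x x' hx', hconst h hcont hinv y y' hy']
      _ ≤ K * dist x' y' := hK.dist_le_mul x' y'
      _ ≤ K * (sInf (distSet G x y) + ε / (K + 1)) :=
          mul_le_mul_of_nonneg_left (le_of_lt hlt) hKnn
      _ = K * sInf (distSet G x y) + K * (ε / (K + 1)) := mul_add _ _ _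
      _ ≤ K * sInf (distSet G x y) + ε := by
          have h1 : (K : ℝ) * (ε / (K + 1)) ≤ ((K : ℝ) + 1) * (ε / (K + 1)) :=
            mul_le_mul_of_nonneg_right (by linarith) (le_of_lt hεK)
          have h2 : ((K : ℝ) + 1) * (ε / (K + 1)) = ε := by
            field_simp
          linarith
  -- points with equal image have equal values under invariant Lipschitz maps
  have heq : ∀ (h : M → X) (K : ℝ≥0), LipschitzWith K h → (∀ (g : G) (x : M), h (g • x) = h x) →
      ∀ x y, q x = q y → h x = h y := by
    intro h K hK hinv x y hxy
    have := hkey h K hK hinv x y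
    rw [hxy, dist_self, mul_zero] at this
    exact dist_le_zero.1 this
  have hiff : ∀ (f : N → X) (K : ℝ≥0), LipschitzWith K (f ∘ q) ↔ LipschitzWith K f := by
    intro f K
    constructor
    · intro hfq
      apply LipschitzWith.of_dist_le_mul
      intro z₁ z₂
      obtain ⟨x, rfl⟩ := hq z₁
      obtain ⟨y, rfl⟩ := hq z₂
      exact hkey (f ∘ q) K hfq (fun g x => by simp [Function.comp, hqg g x]) x y
    · intro hf
      simpa [mul_one] using hf.comp hq1
  refine ⟨fun f₁ f₂ c => rfl, hiff, ?_, ?_, ?_⟩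
  · -- MapsTo
    rintro f ⟨hf0, K, hfK⟩
    refine ⟨hf0, ⟨K, (hiff f K).2 hfK⟩, fun g x => ?_⟩
    simp [Function.comp, hqg g x]
  · -- InjOn
    rintro f₁ - f₂ - hf
    funext z
    obtain ⟨x, rfl⟩ := hq z
    exact congrFun hf x
  · -- SurjOn
    rintro h ⟨h0, ⟨K, hK⟩, hinv⟩
    refine ⟨fun z => h (hq z).choose, ⟨?_, K, ?_⟩, ?_⟩
    · have := heq h K hK hinv (hq (q base)).choose base (hq (q base)).choose_spec
      show h (hq (q base)).choose = 0
      rw [this, h0]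
    · apply (hiff _ K).1
      have hfq : (fun z => h (hq z).choose) ∘ q = h := by
        funext x
        exact heq h K hK hinv (hq (q x)).choose x (hq (q x)).choose_spec
      rw [hfq]; exact hK
    · funext x
      exact heq h K hK hinv (hq (q x)).choose x (hq (q x)).choose_spec
end

section
/- Let G be an amenable group acting continuously on a metric space (M,d) by bi-Lipschitz bijections with uniform bounds: r·d(gx,gy) ≤ d(x,y) ≤ R·d(gx,gy) for all g ∈ G, x,y ∈ M, where 0 < r < R < ∞. Let M be a right-invariant mean on the bounded right-uniformly continuous functions on G. Then D(x,y) := M(g ↦ d(gx,gy)) defines a metric on M satisfying r·D(x,y) ≤ d(x,y) ≤ R·D(x,y), and G acts on (M,D) by isometries. -/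
/-- `f : G → ℝ` is bounded. -/
def IsBdd {G : Type*} (f : G → ℝ) : Prop := ∃ B : ℝ, ∀ g : G, |f g| ≤ B

/-- `f` is right-uniformly continuous. -/
def IsRUC {G : Type*} [Group G] [TopologicalSpace G] (f : G → ℝ) : Prop :=
  ∀ ε > (0 : ℝ), ∃ U ∈ nhds (1 : G), ∀ h ∈ U, ∀ g : G, |f (g * h) - f g| ≤ ε

/-- Membership in `C^b_ru(G)`: bounded and right-uniformly continuous. -/
def IsRUCB {G : Type*} [Group G] [TopologicalSpace G] (f : G → ℝ) : Prop :=
  IsBdd f ∧ IsRUC f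

lemma isRUCB_const {G : Type*} [Group G] [TopologicalSpace G] (c : ℝ) :
    IsRUCB (fun _ : G => c) := by
  refine ⟨⟨|c|, fun g => le_rfl⟩, fun ε hε => ⟨Set.univ, Filter.univ_mem, ?_⟩⟩
  intro h _ g
  simpa using hε.le

lemma isRUCB_sub {G : Type*} [Group G] [TopologicalSpace G] {f f' : G → ℝ}
    (hf : IsRUCB f) (hf' : IsRUCB f') : IsRUCB (fun g => f g - f' g) := by
  obtain ⟨⟨B, hB⟩, hru⟩ := hf
  obtain ⟨⟨B', hB'⟩, hru'⟩ := hf'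
  constructor
  · exact ⟨B + B', fun g => (abs_sub _ _).trans (add_le_add (hB g) (hB' g))⟩
  · intro ε hε
    obtain ⟨U, hU, hUf⟩ := hru (ε / 2) (by linarith)
    obtain ⟨V, hV, hVf⟩ := hru' (ε / 2) (by linarith)
    refine ⟨U ∩ V, Filter.inter_mem hU hV, fun h hh g => ?_⟩
    have h1 := hUf h hh.1 g
    have h2 := hVf h hh.2 g
    have : f (g * h) - f' (g * h) - (f g - f' g)
        = (f (g * h) - f g) - (f' (g * h) - f' g) := by ring
    rw [this]
    calc _ ≤ |f (g * h) - f g| + |f' (g * h) - f' g| := abs_sub _ _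
      _ ≤ ε / 2 + ε / 2 := add_le_add h1 h2
      _ = ε := by ring

lemma isRUCB_smul {G : Type*} [Group G] [TopologicalSpace G] {f : G → ℝ}
    (hf : IsRUCB f) (c : ℝ) : IsRUCB (fun g => c * f g) := by
  obtain ⟨⟨B, hB⟩, hru⟩ := hf
  constructor
  · exact ⟨|c| * B, fun g => by
      rw [abs_mul]
      exact mul_le_mul_of_nonneg_left (hB g) (abs_nonneg c)⟩
  · intro ε hε
    obtain ⟨U, hU, hUf⟩ := hru (ε / (|c| + 1)) (by positivity)
    refine ⟨U, hU, fun h hh g => ?_⟩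
    have := hUf h hh g
    have habs : |c * f (g * h) - c * f g| = |c| * |f (g * h) - f g| := by
      rw [← abs_mul]; ring_nf
    rw [habs]
    calc |c| * |f (g * h) - f g| ≤ |c| * (ε / (|c| + 1)) :=
          mul_le_mul_of_nonneg_left this (abs_nonneg c)
      _ ≤ ε := by
          rw [mul_div_assoc']
          rw [div_le_iff₀ (by positivity)]
          nlinarith [abs_nonneg c, hε.le]

/-- Averaging the metric under an amenable group action.  If `G` acts continuously on `(M, d)`
by uniformly bi-Lipschitz bijections, `r·d(gx, gy) ≤ d(x, y) ≤ R·d(gx, gy)`, and `Mn` is a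
right-invariant mean on `C^b_ru(G)`, then each `g ↦ d(gx, gy)` lies in `C^b_ru(G)`, the
formula `D(x, y) = Mn(g ↦ d(gx, gy))` defines a metric on `M` bi-Lipschitz equivalent to `d`
(with `r·D ≤ d ≤ R·D`), and `G` acts on `(M, D)` by isometries. -/
theorem stmt_10 {G : Type*} [Group G] [TopologicalSpace G] [IsTopologicalGroup G]
    {M : Type*} [MetricSpace M] [MulAction G M]
    (hcont : Continuous fun p : G × M => p.1 • p.2)
    (r R : ℝ) (hr : 0 < r) (hrR : r < R)
    (hbil : ∀ (g : G) (x y : M),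
      r * dist (g • x) (g • y) ≤ dist x y ∧ dist x y ≤ R * dist (g • x) (g • y))
    (Mn : (G → ℝ) →ₗ[ℝ] ℝ)
    (hone : Mn (fun _ => 1) = 1)
    (hpos : ∀ f : G → ℝ, IsRUCB f → (∀ g, 0 ≤ f g) → 0 ≤ Mn f)
    (hinv : ∀ f : G → ℝ, IsRUCB f → ∀ a : G, Mn (fun h => f (h * a⁻¹)) = Mn f) :
    let D : M → M → ℝ := fun x y => Mn (fun g => dist (g • x) (g • y))
    (∀ x y : M, IsRUCB (fun g : G => dist (g • x) (g • y))) ∧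
    (∀ x : M, D x x = 0) ∧
    (∀ x y : M, x ≠ y → 0 < D x y) ∧
    (∀ x y : M, D x y = D y x) ∧
    (∀ x y z : M, D x z ≤ D x y + D y z) ∧
    (∀ x y : M, r * D x y ≤ dist x y ∧ dist x y ≤ R * D x y) ∧
    (∀ (g : G) (x y : M), D (g • x) (g • y) = D x y) := by
  intro D
  have hR : (0:ℝ) < R := hr.trans hrR
  -- membership
  have hmem : ∀ x y : M, IsRUCB (fun g : G => dist (g • x) (g • y)) := by
    intro x y
    constructor
    · refine ⟨dist x y / r, fun g => ?_⟩
      rw [abs_of_nonneg dist_nonneg, le_div_iff₀ hr, mul_comm]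
      exact (hbil g x y).1
    · intro ε hε
      -- continuity of orbit maps at 1
      have key : ∀ z : M, {h : G | dist (h • z) z < r * ε / 2} ∈ nhds (1 : G) := by
        intro z
        have hc : Continuous fun h : G => h • z :=
          hcont.comp (continuous_id.prodMk continuous_const)
        have : IsOpen {h : G | dist (h • z) z < r * ε / 2} :=
          isOpen_lt (continuous_dist.comp (hc.prodMk continuous_const)) continuous_const
        refine this.mem_nhds ?_
        simp only [Set.mem_setOf_eq, one_smul, dist_self]
        positivity
      refine ⟨_ ∩ _, Filter.inter_mem (key x) (key y), fun h hh g => ?_⟩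
      have hx : dist (h • x) x < r * ε / 2 := hh.1
      have hy : dist (h • y) y < r * ε / 2 := hh.2
      show |dist ((g * h) • x) ((g * h) • y) - dist (g • x) (g • y)| ≤ ε
      rw [mul_smul g h x, mul_smul g h y]
      have tri : |dist (g • h • x) (g • h • y) - dist (g • x) (g • y)|
          ≤ dist (g • h • x) (g • x) + dist (g • h • y) (g • y) := by
        have := dist_dist_dist_le (g • h • x) (g • h • y) (g • x) (g • y)
        rwa [Real.dist_eq] at this
      refine tri.trans ?_
      have bx : dist (g • h • x) (g • x) ≤ dist (h • x) x / r := by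
        rw [le_div_iff₀ hr, mul_comm]; exact (hbil g (h • x) x).1
      have by' : dist (g • h • y) (g • y) ≤ dist (h • y) y / r := by
        rw [le_div_iff₀ hr, mul_comm]; exact (hbil g (h • y) y).1
      have : dist (h • x) x / r ≤ ε / 2 := by
        rw [div_le_iff₀ hr]; nlinarith
      have h2 : dist (h • y) y / r ≤ ε / 2 := by
        rw [div_le_iff₀ hr]; nlinarith
      linarith [bx.trans this, by'.trans h2]
  -- Mn of constants
  have hconst : ∀ c : ℝ, Mn (fun _ => c) = c := by
    intro c
    have : (fun _ : G => c) = c • (fun _ : G => (1:ℝ)) := by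
      funext g; simp
    rw [this, map_smul, hone, smul_eq_mul, mul_one]
  -- monotonicity
  have hmono : ∀ f f' : G → ℝ, IsRUCB f → IsRUCB f' → (∀ g, f g ≤ f' g) →
      Mn f ≤ Mn f' := by
    intro f f' hf hf' hle
    have h0 : 0 ≤ Mn (fun g => f' g - f g) :=
      hpos _ (isRUCB_sub hf' hf) (fun g => sub_nonneg.mpr (hle g))
    have : (fun g => f' g - f g) = f' - f := rfl
    rw [this, map_sub] at h0
    linarith
  refine ⟨hmem, ?_, ?_, ?_, ?_, ?_, ?_⟩
  · intro x
    show Mn (fun g => dist (g • x) (g • x)) = 0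
    have : (fun g : G => dist (g • x) (g • x)) = (fun _ => (0:ℝ)) := by
      funext g; simp
    rw [this, hconst]
  · intro x y hxy
    have hd : 0 < dist x y := dist_pos.mpr hxy
    have h1 : Mn (fun _ => dist x y / R) ≤ D x y := by
      refine hmono _ _ (isRUCB_const _) (hmem x y) fun g => ?_
      rw [div_le_iff₀ hR, mul_comm]
      exact (hbil g x y).2
    rw [hconst] at h1
    have h2 : 0 < dist x y / R := by positivity
    linarith
  · intro x y
    show Mn _ = Mn _
    congr 1
    funext g
    exact dist_comm _ _
  · intro x y z
    have key : Mn (fun g => dist (g • x) (g • z)) ≤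
        Mn ((fun g => dist (g • x) (g • y)) + (fun g => dist (g • y) (g • z))) := by
      refine hmono _ _ (hmem x z) ?_ fun g => dist_triangle _ _ _
      have : ((fun g : G => dist (g • x) (g • y)) + fun g => dist (g • y) (g • z))
          = fun g => dist (g • x) (g • y) - (0 - dist (g • y) (g • z)) := by
        funext g; simp only [Pi.add_apply]; ring
      rw [this]
      exact isRUCB_sub (hmem x y) (isRUCB_sub (isRUCB_const 0) (hmem y z))
    rw [map_add] at key
    exact key
  · intro x y
    constructor
    · have h1 : Mn (fun g => r * dist (g • x) (g • y)) ≤ Mn (fun _ => dist x y) :=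
        hmono _ _ (isRUCB_smul (hmem x y) r) (isRUCB_const _) fun g => (hbil g x y).1
      have h2 : (fun g : G => r * dist (g • x) (g • y))
          = r • (fun g => dist (g • x) (g • y)) := rfl
      rw [h2, map_smul, hconst] at h1
      exact h1
    · have h1 : Mn (fun _ => dist x y) ≤ Mn (fun g => R * dist (g • x) (g • y)) :=
        hmono _ _ (isRUCB_const _) (isRUCB_smul (hmem x y) R) fun g => (hbil g x y).2
      have h2 : (fun g : G => R * dist (g • x) (g • y))
          = R • (fun g => dist (g • x) (g • y)) := rfl
      rw [h2, map_smul, hconst] at h1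
      exact h1
  · intro g x y
    have := hinv (fun h => dist (h • x) (h • y)) (hmem x y) g⁻¹
    simp only [inv_inv] at this
    show Mn (fun h => dist (h • g • x) (h • g • y)) = Mn (fun h => dist (h • x) (h • y))
    have e : (fun h : G => dist (h • g • x) (h • g • y))
        = fun h => dist ((h * g) • x) ((h * g) • y) := by
      funext h; rw [mul_smul, mul_smul]
    rw [e]
    exact this
end

section
/- Let G act by isometries on a pointed metric space M and Y_G := closed span{δ(gx) − δ(x) : g ∈ G, x ∈ M} ⊆ F(M). Then the quotient Banach space F(M)/Y_G is linearly isometric to F(M/G) via the map Λ determined by Λ([δ(x)]) = δ([Gx]), where M/G is the space of orbit closures with the quotient metric and base point [G0]. -/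
open scoped NNReal

/-- `(V, δ)` is (a realization of) the Lipschitz-free space over the pointed metric space
`(M, base)`: `δ` is an isometric embedding sending `base` to `0` with linearly dense range,
and every real-valued Lipschitz function on `M` vanishing at `base` extends to a continuous
linear functional on `V` of the same norm. -/
def IsFreeSpace {M V : Type*} [MetricSpace M] [NormedAddCommGroup V] [NormedSpace ℝ V]
    (base : M) (δ : M → V) : Prop :=
  Isometry δ ∧ δ base = 0 ∧ Dense (Submodule.span ℝ (Set.range δ) : Set V) ∧
  ∀ (K : ℝ≥0) (h : M → ℝ), LipschitzWith K h → h base = 0 →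
    ∃ f : V →L[ℝ] ℝ, ‖f‖ ≤ K ∧ ∀ m : M, f (δ m) = h m

/-- Vector-valued universal property of the free space: any Banach-space-valued Lipschitz map
vanishing at the base point extends to a bounded linear map of the same norm. -/
theorem IsFreeSpace.lift {M V : Type*} [MetricSpace M] [NormedAddCommGroup V] [NormedSpace ℝ V]
    {base : M} {δ : M → V} (hfree : IsFreeSpace base δ)
    {W : Type*} [NormedAddCommGroup W] [NormedSpace ℝ W] [CompleteSpace W]
    (K : ℝ≥0) (L : M → W) (hL : LipschitzWith K L) (hL0 : L base = 0) :
    ∃ T : V →L[ℝ] W, (∀ v : V, ‖T v‖ ≤ K * ‖v‖) ∧ ∀ x, T (δ x) = L x := by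
  classical
  set S₁ : (M →₀ ℝ) →ₗ[ℝ] V := Finsupp.linearCombination ℝ δ with hS₁
  set S₂ : (M →₀ ℝ) →ₗ[ℝ] W := Finsupp.linearCombination ℝ L with hS₂
  have key : ∀ a : M →₀ ℝ, ‖S₂ a‖ ≤ K * ‖S₁ a‖ := by
    intro a
    obtain ⟨φ, hφ1, hφx⟩ := exists_dual_vector'' ℝ (S₂ a)
    have hφ1' : ‖φ‖₊ ≤ 1 := by exact_mod_cast hφ1
    have hLip : LipschitzWith K (fun m => φ (L m)) :=
      (φ.lipschitz.comp hL).weaken (mul_le_of_le_one_left zero_le hφ1')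
    obtain ⟨f, hf1, hf⟩ := hfree.2.2.2 K _ hLip (by simp [hL0])
    have hcomp : φ (S₂ a) = f (S₁ a) := by
      have h1 : (φ : W →ₗ[ℝ] ℝ) (S₂ a) = Finsupp.linearCombination ℝ (⇑φ ∘ L) a :=
        Finsupp.apply_linearCombination ℝ _ _ _
      have h2 : (f : V →ₗ[ℝ] ℝ) (S₁ a) = Finsupp.linearCombination ℝ (⇑f ∘ δ) a :=
        Finsupp.apply_linearCombination ℝ _ _ _
      have h3 : ⇑φ ∘ L = ⇑f ∘ δ := by funext m; exact (hf m).symm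
      rw [h3] at h1
      exact h1.trans h2.symm
    have hnorm : ‖S₂ a‖ = φ (S₂ a) := by exact_mod_cast hφx.symm
    calc ‖S₂ a‖ = f (S₁ a) := by rw [hnorm, hcomp]
      _ ≤ ‖f (S₁ a)‖ := le_abs_self _
      _ ≤ ‖f‖ * ‖S₁ a‖ := f.le_opNorm _
      _ ≤ K * ‖S₁ a‖ := mul_le_mul_of_nonneg_right hf1 (norm_nonneg _)
  have hker : LinearMap.ker S₁ ≤ LinearMap.ker S₂ := by
    intro a ha
    rw [LinearMap.mem_ker] at ha ⊢
    have := key a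
    rw [ha, norm_zero, mul_zero] at this
    exact norm_le_zero_iff.mp this
  set T₀ : LinearMap.range S₁ →ₗ[ℝ] W :=
    ((LinearMap.ker S₁).liftQ S₂ hker).comp S₁.quotKerEquivRange.symm.toLinearMap with hT₀def
  have hT₀ : ∀ (a : M →₀ ℝ) (h : S₁ a ∈ LinearMap.range S₁), T₀ ⟨S₁ a, h⟩ = S₂ a := by
    intro a h
    have h1 : S₁.quotKerEquivRange.symm ⟨S₁ a, h⟩ = Submodule.Quotient.mk a := by
      rw [LinearEquiv.symm_apply_eq]
      exact Subtype.ext (S₁.quotKerEquivRange_apply_mk a).symm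
    simp only [hT₀def, LinearMap.comp_apply, LinearEquiv.coe_toLinearMap, h1,
      Submodule.liftQ_apply]
  have hbound : ∀ u : LinearMap.range S₁, ‖T₀ u‖ ≤ (K : ℝ) * ‖u‖ := by
    rintro ⟨v, a, rfl⟩
    rw [hT₀ a ⟨a, rfl⟩]
    exact key a
  set T₀c : LinearMap.range S₁ →L[ℝ] W := T₀.mkContinuous K hbound with hT₀c
  set e : LinearMap.range S₁ →L[ℝ] V := (LinearMap.range S₁).subtypeL with he
  have hiso_e : Isometry ⇑e := fun _ _ => rfl
  have h_e : IsUniformInducing ⇑e := hiso_e.isUniformInducing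
  have h_dense : DenseRange ⇑e := by
    have hre : Set.range ⇑e = (LinearMap.range S₁ : Set V) := by
      ext v
      constructor
      · rintro ⟨u, rfl⟩; exact u.2
      · intro hv; exact ⟨⟨v, hv⟩, rfl⟩
    have hrange : (LinearMap.range S₁ : Set V) = (Submodule.span ℝ (Set.range δ) : Set V) := by
      rw [hS₁, Finsupp.range_linearCombination]
    rw [DenseRange, hre, hrange]
    exact hfree.2.2.1
  refine ⟨T₀c.extend e, ?_, ?_⟩
  · intro v
    refine h_dense.induction_on v ?_ ?_
    · exact isClosed_le ((T₀c.extend e).continuous.norm)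
        (continuous_const.mul continuous_norm)
    · intro u
      rw [ContinuousLinearMap.extend_eq _ h_dense h_e]
      have h2 : ‖e u‖ = ‖u‖ := rfl
      rw [h2]
      exact T₀c.le_of_opNorm_le (T₀.mkContinuous_norm_le (K.coe_nonneg) hbound) u
  · intro x
    have hx : δ x ∈ LinearMap.range S₁ :=
      ⟨Finsupp.single x 1, by simp [hS₁, Finsupp.linearCombination_single]⟩
    have h1 : (⟨δ x, hx⟩ : LinearMap.range S₁) = ⟨S₁ (Finsupp.single x 1), LinearMap.mem_range_self S₁ _⟩ := by
      ext; simp [hS₁, Finsupp.linearCombination_single]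
    have h2 := ContinuousLinearMap.extend_eq T₀c h_dense h_e ⟨δ x, hx⟩
    have h3 : e (⟨δ x, hx⟩ : LinearMap.range S₁) = δ x := rfl
    rw [h3] at h2
    rw [h2]
    show T₀ _ = L x
    rw [h1, hT₀]
    simp [hS₂, Finsupp.linearCombination_single]

/-- Let `G` act by isometries on a pointed metric space `M`, let `(V, δ)` be the free space
over `M`, let `N = M/G` be the space of orbit closures with the quotient metric (realized by
a surjection `q`), and let `(W, δ')` be the free space over `N`.  With
`Y_G := closed span {δ(gx) − δ(x)}`, the quotient Banach space `V ⧸ Y_G` is linearly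
isometric to `W = F(M/G)` via the map `Λ` determined by `Λ[δ(x)] = δ'([Gx])`. -/
theorem stmt_14 {M : Type*} [MetricSpace M] (base : M)
    {G : Type*} [Group G] [MulAction G M]
    (hisoM : ∀ g : G, Isometry (fun x : M => g • x))
    {N : Type*} [MetricSpace N] (q : M → N) (hq : Function.Surjective q)
    (hdist : ∀ x y : M, dist (q x) (q y) = sInf ((fun p : M × M => dist p.1 p.2) ''
        (closure (MulAction.orbit G x) ×ˢ closure (MulAction.orbit G y))))
    {V : Type*} [NormedAddCommGroup V] [NormedSpace ℝ V] [CompleteSpace V]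
    (δ : M → V) (hfree : IsFreeSpace base δ)
    {W : Type*} [NormedAddCommGroup W] [NormedSpace ℝ W] [CompleteSpace W]
    (δ' : N → W) (hfree' : IsFreeSpace (q base) δ') :
    let Y_G : Submodule ℝ V :=
      (Submodule.span ℝ {v : V | ∃ (g : G) (x : M), v = δ (g • x) - δ x}).topologicalClosure
    ∃ Λ : (V ⧸ Y_G) ≃ₗᵢ[ℝ] W,
      ∀ x : M, Λ (Submodule.Quotient.mk (δ x)) = δ' (q x) := by
  intro Y_G
  classical
  haveI hYclosed : IsClosed (Y_G : Set V) := Submodule.isClosed_topologicalClosure _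
  obtain ⟨hiso, hδ0, hdense, huniv⟩ := hfree
  -- basic facts about the sets appearing in `hdist`
  have hbdd : ∀ x y : M, BddBelow ((fun p : M × M => dist p.1 p.2) ''
      (closure (MulAction.orbit G x) ×ˢ closure (MulAction.orbit G y))) := by
    intro x y
    refine ⟨0, ?_⟩
    rintro d ⟨p, _, rfl⟩
    exact dist_nonneg
  have hne : ∀ x y : M, ((fun p : M × M => dist p.1 p.2) ''
      (closure (MulAction.orbit G x) ×ˢ closure (MulAction.orbit G y))).Nonempty := by
    intro x y
    exact ⟨dist x y, ⟨(x, y), ⟨subset_closure (MulAction.mem_orbit_self x),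
      subset_closure (MulAction.mem_orbit_self y)⟩, rfl⟩⟩
  have hq_lip : ∀ x y : M, dist (q x) (q y) ≤ dist x y := by
    intro x y
    rw [hdist]
    exact csInf_le (hbdd x y) ⟨(x, y), ⟨subset_closure (MulAction.mem_orbit_self x),
      subset_closure (MulAction.mem_orbit_self y)⟩, rfl⟩
  have hgq : ∀ (g : G) (x : M), q (g • x) = q x := by
    intro g x
    have h0 : dist (q (g • x)) (q x) = 0 := by
      rw [hdist]
      refine le_antisymm (csInf_le (hbdd _ _) ?_) (le_csInf (hne _ _) ?_)
      · refine ⟨(x, x), ⟨?_, subset_closure (MulAction.mem_orbit_self x)⟩, dist_self x⟩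
        rw [MulAction.orbit_smul]
        exact subset_closure (MulAction.mem_orbit_self x)
      · rintro d ⟨p, _, rfl⟩
        exact dist_nonneg
    exact dist_eq_zero.mp h0
  -- orbit closures and membership in Y_G
  have hmem : ∀ (x x' : M), x' ∈ closure (MulAction.orbit G x) → δ x' - δ x ∈ Y_G := by
    intro x x' hx'
    have hsub : closure (MulAction.orbit G x) ⊆ (fun z => δ z - δ x) ⁻¹' (Y_G : Set V) := by
      apply closure_minimal
      · rintro z ⟨g, rfl⟩
        exact Submodule.le_topologicalClosure _ (Submodule.subset_span ⟨g, x, rfl⟩)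
      · exact hYclosed.preimage (hiso.continuous.sub continuous_const)
    exact hsub hx'
  -- the key norm estimate in the quotient
  have hA : ∀ x y : M,
      ‖(Submodule.Quotient.mk (δ x - δ y) : V ⧸ Y_G)‖ ≤ dist (q x) (q y) := by
    intro x y
    rw [hdist]
    refine le_csInf (hne x y) ?_
    rintro d ⟨⟨x', y'⟩, ⟨hx', hy'⟩, rfl⟩
    have h1 : (Submodule.Quotient.mk (δ x - δ y) : V ⧸ Y_G) =
        Submodule.Quotient.mk (δ x' - δ y') := by
      rw [Submodule.Quotient.eq]
      have hmem2 := sub_mem (hmem x x' hx') (hmem y y' hy')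
      have habel : (δ x - δ y) - (δ x' - δ y') = -((δ x' - δ x) - (δ y' - δ y)) := by abel
      rw [habel]
      exact neg_mem hmem2
    rw [h1]
    calc ‖(Submodule.Quotient.mk (δ x' - δ y') : V ⧸ Y_G)‖ ≤ ‖δ x' - δ y'‖ :=
          Submodule.Quotient.norm_mk_le _ _
      _ = dist x' y' := by rw [← dist_eq_norm]; exact hiso.dist_eq x' y'
  have hq_eq : ∀ x y : M, q x = q y →
      (Submodule.Quotient.mk (δ x) : V ⧸ Y_G) = Submodule.Quotient.mk (δ y) := by
    intro x y h
    have h1 := hA x y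
    rw [h, dist_self] at h1
    have h2 : (Submodule.Quotient.mk (δ x - δ y) : V ⧸ Y_G) = 0 :=
      norm_le_zero_iff.mp h1
    rwa [Submodule.Quotient.mk_sub, sub_eq_zero] at h2
  -- construct T : V →L[ℝ] W with T (δ x) = δ' (q x)
  have hLip : LipschitzWith 1 (fun m : M => δ' (q m)) := by
    apply LipschitzWith.of_dist_le_mul
    intro x y
    rw [hfree'.1.dist_eq]
    simpa using hq_lip x y
  obtain ⟨T, hTnorm, hTδ⟩ :=
    IsFreeSpace.lift ⟨hiso, hδ0, hdense, huniv⟩ 1 (fun m : M => δ' (q m)) hLip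
      (by simpa using hfree'.2.1)
  -- Y_G is contained in the kernel of T
  have hYker : Y_G ≤ LinearMap.ker (T : V →ₗ[ℝ] W) := by
    apply Submodule.topologicalClosure_minimal
    · rw [Submodule.span_le]
      rintro v ⟨g, x, rfl⟩
      simp only [SetLike.mem_coe, LinearMap.mem_ker, ContinuousLinearMap.coe_coe, map_sub]
      rw [hTδ, hTδ, hgq g x, sub_self]
    · exact ContinuousLinearMap.isClosed_ker T
  set Λl : (V ⧸ Y_G) →ₗ[ℝ] W := Y_G.liftQ (T : V →ₗ[ℝ] W) hYker with hΛl
  have hΛmk : ∀ v : V, Λl (Submodule.Quotient.mk v) = T v := fun v => rfl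
  have hΛbound : ∀ u : V ⧸ Y_G, ‖Λl u‖ ≤ ‖u‖ := by
    intro u
    obtain ⟨v, rfl⟩ := Submodule.Quotient.mk_surjective Y_G u
    rw [hΛmk]
    refine le_of_forall_pos_le_add ?_
    intro ε hε
    obtain ⟨m, hm, hmlt⟩ := Submodule.Quotient.norm_mk_lt
      (Submodule.Quotient.mk v : V ⧸ Y_G) hε
    have hTm : T m = T v := by
      have h1 : m - v ∈ Y_G := (Submodule.Quotient.eq Y_G).mp hm
      have h2 : T (m - v) = 0 := hYker h1
      rw [map_sub, sub_eq_zero] at h2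
      exact h2
    calc ‖T v‖ = ‖T m‖ := by rw [hTm]
      _ ≤ 1 * ‖m‖ := by simpa using hTnorm m
      _ = ‖m‖ := one_mul _
      _ ≤ ‖(Submodule.Quotient.mk v : V ⧸ Y_G)‖ + ε := hmlt.le
  -- the inverse map S : W →L[ℝ] (V ⧸ Y_G)
  set xof : N → M := fun n => (hq n).choose with hxofdef
  have hxof : ∀ n, q (xof n) = n := fun n => (hq n).choose_spec
  set R : N → V ⧸ Y_G := fun n => Submodule.Quotient.mk (δ (xof n)) with hRdef
  have hR : ∀ x : M, R (q x) = Submodule.Quotient.mk (δ x) := by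
    intro x
    exact hq_eq _ _ (hxof (q x))
  have hRlip : LipschitzWith 1 R := by
    apply LipschitzWith.of_dist_le_mul
    intro n₁ n₂
    rw [hRdef]
    simp only
    rw [dist_eq_norm, ← Submodule.Quotient.mk_sub]
    calc ‖(Submodule.Quotient.mk (δ (xof n₁) - δ (xof n₂)) : V ⧸ Y_G)‖
        ≤ dist (q (xof n₁)) (q (xof n₂)) := hA _ _
      _ = dist n₁ n₂ := by rw [hxof, hxof]
      _ ≤ 1 * dist n₁ n₂ := by rw [one_mul]
  have hR0 : R (q base) = 0 := by
    rw [hR base, hδ0, Submodule.Quotient.mk_zero]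
  obtain ⟨S, hSnorm, hSδ'⟩ := hfree'.lift 1 R hRlip hR0
  -- S ∘ Λl = id
  have hSΛ : ∀ u : V ⧸ Y_G, S (Λl u) = u := by
    have hfun : (fun v : V => S (T v)) = fun v : V => (Submodule.Quotient.mk v : V ⧸ Y_G) := by
      refine Continuous.ext_on hdense (S.continuous.comp T.continuous) ?_ ?_
      · exact continuous_quot_mk.comp continuous_id
      · have heqset : Set.EqOn (fun v : V => S (T v))
            (fun v : V => (Submodule.Quotient.mk v : V ⧸ Y_G)) (Set.range δ) := by
          rintro _ ⟨x, rfl⟩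
          show S (T (δ x)) = Submodule.Quotient.mk (δ x)
          rw [hTδ, hSδ', hR]
        exact LinearMap.eqOn_span' (f := (S : W →ₗ[ℝ] V ⧸ Y_G).comp (T : V →ₗ[ℝ] W))
          (g := Y_G.mkQ) heqset
    intro u
    obtain ⟨v, rfl⟩ := Submodule.Quotient.mk_surjective Y_G u
    rw [hΛmk]
    exact congrFun hfun v
  -- Λl is continuous, and Λl ∘ S = id
  set Λc : (V ⧸ Y_G) →L[ℝ] W := Λl.mkContinuous 1 (fun u => by simpa using hΛbound u) with hΛc
  have hΛS : ∀ w : W, Λl (S w) = w := by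
    have hfun : (fun w : W => Λc (S w)) = fun w : W => w := by
      refine Continuous.ext_on hfree'.2.2.1 (Λc.continuous.comp S.continuous) continuous_id ?_
      have heqset : Set.EqOn (fun w : W => Λc (S w)) (fun w : W => w) (Set.range δ') := by
        rintro _ ⟨n, rfl⟩
        show Λc (S (δ' n)) = δ' n
        rw [hSδ']
        show Λl (R n) = δ' n
        rw [hRdef]
        show Λl (Submodule.Quotient.mk (δ (xof n))) = δ' n
        rw [hΛmk, hTδ, hxof]
      exact LinearMap.eqOn_span' (f := (Λc : (V ⧸ Y_G) →ₗ[ℝ] W).comp (S : W →ₗ[ℝ] V ⧸ Y_G))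
        (g := LinearMap.id) heqset
    exact fun w => congrFun hfun w
  -- norm equality
  have hnorm : ∀ u : V ⧸ Y_G, ‖Λl u‖ = ‖u‖ := by
    intro u
    refine le_antisymm (hΛbound u) ?_
    calc ‖u‖ = ‖S (Λl u)‖ := by rw [hSΛ u]
      _ ≤ 1 * ‖Λl u‖ := by simpa using hSnorm (Λl u)
      _ = ‖Λl u‖ := one_mul _
  set eqv : (V ⧸ Y_G) ≃ₗ[ℝ] W :=
    LinearEquiv.ofLinear Λl (S : W →ₗ[ℝ] V ⧸ Y_G)
      (LinearMap.ext fun w => hΛS w) (LinearMap.ext fun u => hSΛ u) with heqv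
  refine ⟨{ toLinearEquiv := eqv, norm_map' := hnorm }, fun x => ?_⟩
  show Λl (Submodule.Quotient.mk (δ x)) = δ' (q x)
  rw [hΛmk, hTδ]
end

section
/- Let G be a compact group acting continuously by isometries on a pointed metric space M, and let R_G : F(M) → F(M) be the averaging projection R_G(x) = ∫_G T_g(x) dμ(g), where T_g is the linear isometry of F(M) with T_g δ(m) = δ(gm) − δ(g0). Then the map M/G → F(M), [Gx] ↦ R_G(δ(x)), is well-defined and 1-Lipschitz with respect to the quotient metric, using that R_G(δ(gx)) = R_G(δ(x)) for all g ∈ G, x ∈ M. -/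
open MeasureTheory

/-- Let `G` be a compact group with Haar probability `μ` acting continuously by isometries on
a pointed metric space `M`, let `(V, δ)` realize the Lipschitz-free space `F(M)` (isometric
embedding with `δ base = 0` and dense span), and let `T_g : V → V` be the induced linear
isometries, `T_g(δ m) = δ(g•m) − δ(g•base)`.  Let `R_G(v) = ∫ T_g v dμ(g)` be the averaging
projection.  Then `R_G(δ(gx)) = R_G(δ x)` for all `g, x`, and the induced map
`M/G → F(M)`, `[Gx] ↦ R_G(δ x)` (through the quotient `q : M → N`) is well defined and
`1`-Lipschitz for the quotient metric. -/
theorem stmt_16 {M : Type*} [MetricSpace M] (base : M)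
    {G : Type*} [Group G] [TopologicalSpace G] [IsTopologicalGroup G]
    [CompactSpace G] [MeasurableSpace G] [BorelSpace G]
    (μ : Measure G) [IsProbabilityMeasure μ]
    [μ.IsMulLeftInvariant] [μ.IsMulRightInvariant]
    [MulAction G M]
    (hisoM : ∀ g : G, Isometry (fun x : M => g • x))
    (hcontM : Continuous fun p : G × M => p.1 • p.2)
    {V : Type*} [NormedAddCommGroup V] [NormedSpace ℝ V] [CompleteSpace V]
    (δ : M → V) (hδ : Isometry δ) (hbase : δ base = 0)
    (hdense : Dense (Submodule.span ℝ (Set.range δ) : Set V))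
    (T : G → V →L[ℝ] V)
    (hT : ∀ (g : G) (m : M), T g (δ m) = δ (g • m) - δ (g • base))
    (hTiso : ∀ g : G, Isometry (T g))
    (hTcont : Continuous fun p : G × V => T p.1 p.2)
    {N : Type*} [MetricSpace N] (q : M → N) (hq : Function.Surjective q)
    (hdist : ∀ x y : M, dist (q x) (q y) = sInf ((fun p : M × M => dist p.1 p.2) ''
        (closure (MulAction.orbit G x) ×ˢ closure (MulAction.orbit G y)))) :
    let Rm : V → V := fun v => ∫ g, T g v ∂μ
    (∀ (g : G) (x : M), Rm (δ (g • x)) = Rm (δ x)) ∧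
    ∃ F : N → V, (∀ x : M, F (q x) = Rm (δ x)) ∧ LipschitzWith 1 F := by
  intro Rm
  -- continuity and integrability helpers
  have hcontTv : ∀ v : V, Continuous fun g : G => T g v := fun v =>
    hTcont.comp (continuous_id.prodMk continuous_const)
  have hintT : ∀ v : V, Integrable (fun g : G => T g v) μ := fun v =>
    (hcontTv v).integrable_of_hasCompactSupport (HasCompactSupport.of_compactSpace _)
  have hcontδ : ∀ (y : M) (c : G), Continuous fun h : G => δ ((h * c) • y) := by
    intro y c
    exact hδ.continuous.comp (hcontM.comp
      (((continuous_id.mul continuous_const)).prodMk continuous_const))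
  have hintδ : ∀ (y : M) (c : G), Integrable (fun h : G => δ ((h * c) • y)) μ := fun y c =>
    (hcontδ y c).integrable_of_hasCompactSupport (HasCompactSupport.of_compactSpace _)
  -- part 1
  have key : ∀ (g : G) (x : M), Rm (δ (g • x)) = Rm (δ x) := by
    intro g x
    have e1 : Rm (δ (g • x)) = (∫ h, δ ((h * g) • x) ∂μ) - ∫ h, δ ((h * 1) • base) ∂μ := by
      show (∫ h, T h (δ (g • x)) ∂μ) = _
      rw [← integral_sub (hintδ x g) (hintδ base 1)]
      congr 1; funext h
      rw [hT, ← mul_smul]; simp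
    have e2 : Rm (δ x) = (∫ h, δ ((h * 1) • x) ∂μ) - ∫ h, δ ((h * 1) • base) ∂μ := by
      show (∫ h, T h (δ x) ∂μ) = _
      rw [← integral_sub (hintδ x 1) (hintδ base 1)]
      congr 1; funext h
      rw [hT]; simp
    rw [e1, e2]
    congr 1
    have := integral_mul_right_eq_self (μ := μ) (fun h : G => δ (h • x)) g
    simpa using this
  -- Rm contracts distances
  have hRlip : ∀ v w : V, ‖Rm v - Rm w‖ ≤ ‖v - w‖ := by
    intro v w
    have e : Rm v - Rm w = ∫ g, (T g v - T g w) ∂μ :=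
      (integral_sub (hintT v) (hintT w)).symm
    rw [e]
    calc ‖∫ g, (T g v - T g w) ∂μ‖ ≤ ∫ g, ‖T g v - T g w‖ ∂μ :=
          norm_integral_le_integral_norm _
      _ = ∫ _g, ‖v - w‖ ∂μ := by
          congr 1; funext g
          rw [← map_sub, (hTiso g).norm_map_of_map_zero (map_zero _)]
      _ = ‖v - w‖ := by simp
  set f : M → V := fun m => Rm (δ m) with hf
  have hflip : LipschitzWith 1 f := by
    apply LipschitzWith.of_dist_le_mul
    intro x y
    rw [NNReal.coe_one, one_mul, dist_eq_norm]
    calc ‖f x - f y‖ ≤ ‖δ x - δ y‖ := hRlip _ _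
      _ = dist x y := by rw [← dist_eq_norm, hδ.dist_eq]
  -- f constant on orbit closures
  have horb : ∀ x : M, ∀ y ∈ closure (MulAction.orbit G x), f y = f x := by
    intro x y hy
    have hcl : IsClosed {m : M | f m = f x} :=
      isClosed_eq hflip.continuous continuous_const
    have hsub : MulAction.orbit G x ⊆ {m : M | f m = f x} := by
      rintro _ ⟨g, rfl⟩; exact key g x
    exact closure_minimal hsub hcl hy
  -- main estimate
  have hA : ∀ x y : M, dist (f x) (f y) ≤ dist (q x) (q y) := by
    intro x y
    rw [hdist]
    apply le_csInf
    · exact ⟨dist x y, ⟨(x, y), ⟨subset_closure (MulAction.mem_orbit_self x),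
        subset_closure (MulAction.mem_orbit_self y)⟩, rfl⟩⟩
    · rintro b ⟨⟨a, c⟩, ⟨ha, hc⟩, rfl⟩
      calc dist (f x) (f y) = dist (f a) (f c) := by
            rw [horb x a ha, horb y c hc]
        _ ≤ 1 * dist a c := hflip.dist_le_mul a c
        _ = dist a c := one_mul _
  refine ⟨key, fun n => f (Classical.choose (hq n)), ?_, ?_⟩
  · intro x
    have h := Classical.choose_spec (hq (q x))
    have h2 : dist (f (Classical.choose (hq (q x)))) (f x) ≤ 0 := by
      have := hA (Classical.choose (hq (q x))) x
      rwa [h, dist_self] at this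
    exact dist_le_zero.mp h2
  · apply LipschitzWith.of_dist_le_mul
    intro n m
    rw [NNReal.coe_one, one_mul]
    calc dist (f (Classical.choose (hq n))) (f (Classical.choose (hq m)))
        ≤ dist (q (Classical.choose (hq n))) (q (Classical.choose (hq m))) := hA _ _
      _ = dist n m := by rw [Classical.choose_spec (hq n), Classical.choose_spec (hq m)]
end

section
/- Let G be a compact group acting continuously by isometries on a pointed metric space M. Then the Lipschitz-free space F(M/G) over the orbit space (orbit closures with quotient metric) is isometrically isomorphic to a 1-complemented subspace of F(M); namely, the Haar-averaging projection R_G : F(M) → F(M) has range linearly isometric to F(M/G), via the isometry sending δ([Gx]) to R_G(δ(x)). -/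
open MeasureTheory
open scoped NNReal

/-- Let `G` be a compact group (with Haar probability `μ`) acting continuously by isometries
on a pointed metric space `M`.  Let `(V, δ)` realize `F(M)`, let `N = M/G` be the space of
orbit closures with the quotient metric (via `q`), and let `(W, δ')` realize `F(M/G)`.
With `T_g` the induced linear isometries of `V` and `R_G(v) = ∫ T_g v dμ(g)` the Haar
averaging projection, `F(M/G)` embeds isometrically onto the range of `R_G` via
`δ'([Gx]) ↦ R_G(δ x)`; in particular `F(M/G)` is isometric to a `1`-complemented subspace
of `F(M)`. -/
theorem stmt_17 {M : Type*} [MetricSpace M] (base : M)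
    {G : Type*} [Group G] [TopologicalSpace G] [IsTopologicalGroup G]
    [CompactSpace G] [MeasurableSpace G] [BorelSpace G]
    (μ : Measure G) [IsProbabilityMeasure μ]
    [μ.IsMulLeftInvariant] [μ.IsMulRightInvariant]
    [MulAction G M]
    (hisoM : ∀ g : G, Isometry (fun x : M => g • x))
    (hcontM : Continuous fun p : G × M => p.1 • p.2)
    {V : Type*} [NormedAddCommGroup V] [NormedSpace ℝ V] [CompleteSpace V]
    (δ : M → V) (hfree : IsFreeSpace base δ)
    (T : G → V →L[ℝ] V)
    (hT : ∀ (g : G) (m : M), T g (δ m) = δ (g • m) - δ (g • base))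
    (hTiso : ∀ g : G, Isometry (T g))
    (hTcont : Continuous fun p : G × V => T p.1 p.2)
    {N : Type*} [MetricSpace N] (q : M → N) (hq : Function.Surjective q)
    (hdist : ∀ x y : M, dist (q x) (q y) = sInf ((fun p : M × M => dist p.1 p.2) ''
        (closure (MulAction.orbit G x) ×ˢ closure (MulAction.orbit G y))))
    {W : Type*} [NormedAddCommGroup W] [NormedSpace ℝ W] [CompleteSpace W]
    (δ' : N → W) (hfree' : IsFreeSpace (q base) δ') :
    let Rm : V → V := fun v => ∫ g, T g v ∂μ
    (∀ v w : V, Rm (v + w) = Rm v + Rm w) ∧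
    (∀ (c : ℝ) (v : V), Rm (c • v) = c • Rm v) ∧
    (∀ v : V, ‖Rm v‖ ≤ ‖v‖) ∧
    (∀ v : V, Rm (Rm v) = Rm v) ∧
    ∃ J : W →ₗᵢ[ℝ] V,
      (∀ x : M, J (δ' (q x)) = Rm (δ x)) ∧ Set.range J = Set.range Rm := by
  classical
  intro Rm
  obtain ⟨hδiso, hδ0, hδdense, hδuniv⟩ := hfree
  obtain ⟨hδ'iso, hδ'0, hδ'dense, hδ'univ⟩ := hfree'
  -- norm preservation of `T g`
  have hTnorm : ∀ (g : G) (v : V), ‖T g v‖ = ‖v‖ := by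
    intro g v
    have h := (hTiso g).dist_eq v 0
    simpa [dist_eq_norm, map_zero] using h
  -- continuity and integrability
  have hTcv : ∀ v : V, Continuous fun g : G => T g v := fun v =>
    hTcont.comp (continuous_id.prodMk continuous_const)
  have hInt : ∀ v : V, Integrable (fun g : G => T g v) μ := fun v =>
    (hTcv v).integrable_of_hasCompactSupport (HasCompactSupport.of_compactSpace _)
  -- basic algebraic properties of `Rm`
  have hRadd : ∀ v w : V, (∫ g, T g (v + w) ∂μ) = (∫ g, T g v ∂μ) + ∫ g, T g w ∂μ := by
    intro v w
    simp only [map_add]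
    exact integral_add (hInt v) (hInt w)
  have hRsmul : ∀ (c : ℝ) (v : V), (∫ g, T g (c • v) ∂μ) = c • ∫ g, T g v ∂μ := by
    intro c v
    simp only [_root_.map_smul]
    exact integral_smul c _
  have hRnorm : ∀ v : V, ‖∫ g, T g v ∂μ‖ ≤ ‖v‖ := by
    intro v
    calc ‖∫ g, T g v ∂μ‖ ≤ ∫ g, ‖T g v‖ ∂μ := norm_integral_le_integral_norm _
    _ = ∫ _, ‖v‖ ∂μ := by simp [hTnorm]
    _ = ‖v‖ := by simp
  -- `Rm` as a continuous linear map
  let RmL : V →L[ℝ] V :=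
    LinearMap.mkContinuous (IsLinearMap.mk' _ ⟨hRadd, hRsmul⟩) 1
      (fun v => by simpa using hRnorm v)
  have hRmL : ∀ v : V, RmL v = ∫ g, T g v ∂μ := fun v => rfl
  -- composition law for `T`
  have hTmul : ∀ (g h : G) (v : V), T g (T h v) = T (g * h) v := by
    intro g h
    have hcont1 : Continuous fun v : V => T g (T h v) := (T g).continuous.comp (T h).continuous
    have heq : Set.EqOn (fun v : V => T g (T h v)) (fun v => T (g * h) v)
        (Submodule.span ℝ (Set.range δ) : Set V) := by
      intro v hv
      induction hv using Submodule.span_induction with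
      | mem x hx =>
        obtain ⟨m, rfl⟩ := hx
        show T g (T h (δ m)) = T (g * h) (δ m)
        simp only [hT, map_sub, mul_smul]
        abel
      | zero => simp
      | add x y _ _ hx hy =>
        have hx' : T g (T h x) = T (g * h) x := hx
        have hy' : T g (T h y) = T (g * h) y := hy
        show T g (T h (x + y)) = T (g * h) (x + y)
        simp only [map_add]
        rw [hx', hy']
      | smul a x _ hx =>
        have hx' : T g (T h x) = T (g * h) x := hx
        show T g (T h (a • x)) = T (g * h) (a • x)
        simp only [_root_.map_smul]
        rw [hx']
    have hfg := Continuous.ext_on hδdense hcont1 (T (g * h)).continuous heq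
    exact fun v => congrFun hfg v
  -- `T g` fixes averages
  have hTR : ∀ (g : G) (v : V), T g (∫ h, T h v ∂μ) = ∫ h, T h v ∂μ := by
    intro g v
    calc T g (∫ h, T h v ∂μ) = ∫ h, T g (T h v) ∂μ :=
          (ContinuousLinearMap.integral_comp_comm _ (hInt v)).symm
    _ = ∫ h, T (g * h) v ∂μ := by simp_rw [hTmul]
    _ = ∫ h, T h v ∂μ := integral_mul_left_eq_self (fun h => T h v) g
  have hRidem : ∀ v : V, (∫ g, T g (∫ h, T h v ∂μ) ∂μ) = ∫ h, T h v ∂μ := by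
    intro v
    simp_rw [hTR]
    simp
  -- `Rm (δ (g • x)) = Rm (δ x)`
  have hδc : ∀ x : M, Continuous fun g : G => δ (g • x) := fun x =>
    hδiso.continuous.comp (hcontM.comp (continuous_id.prodMk continuous_const))
  have hδInt : ∀ x : M, Integrable (fun g : G => δ (g • x)) μ := fun x =>
    (hδc x).integrable_of_hasCompactSupport (HasCompactSupport.of_compactSpace _)
  have hA : ∀ (g : G) (x : M), (∫ h, δ (h • (g • x)) ∂μ) = ∫ h, δ (h • x) ∂μ := by
    intro g x
    simp_rw [← mul_smul]
    exact integral_mul_right_eq_self (fun h => δ (h • x)) g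
  have hRδ : ∀ x : M,
      (∫ g, T g (δ x) ∂μ) = (∫ g, δ (g • x) ∂μ) - ∫ g, δ (g • base) ∂μ := by
    intro x
    simp_rw [hT]
    exact integral_sub (hδInt x) (hδInt base)
  have horb : ∀ (g : G) (x : M), (∫ h, T h (δ (g • x)) ∂μ) = ∫ h, T h (δ x) ∂μ := by
    intro g x
    rw [hRδ, hRδ, hA]
  -- Lipschitz estimates
  have hLip : ∀ x y : M, ‖(∫ g, T g (δ x) ∂μ) - ∫ g, T g (δ y) ∂μ‖ ≤ dist x y := by
    intro x y
    rw [← integral_sub (hInt _) (hInt _)]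
    simp_rw [← map_sub]
    calc ‖∫ g, T g (δ x - δ y) ∂μ‖ ≤ ‖δ x - δ y‖ := hRnorm _
    _ = dist x y := by rw [← dist_eq_norm, hδiso.dist_eq]
  have hRc : Continuous fun x : M => ∫ g, T g (δ x) ∂μ := by
    refine LipschitzWith.continuous (K := 1) (LipschitzWith.of_dist_le_mul ?_)
    intro x y
    rw [dist_eq_norm]
    simpa using hLip x y
  have hclos : ∀ x x' : M, x' ∈ closure (MulAction.orbit G x) →
      (∫ g, T g (δ x') ∂μ) = ∫ g, T g (δ x) ∂μ := by
    intro x x' hx'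
    have hcl : IsClosed {y : M | (∫ g, T g (δ y) ∂μ) = ∫ g, T g (δ x) ∂μ} :=
      isClosed_eq hRc continuous_const
    have hsub : MulAction.orbit G x ⊆ {y : M | (∫ g, T g (δ y) ∂μ) = ∫ g, T g (δ x) ∂μ} := by
      rintro _ ⟨g, rfl⟩
      exact horb g x
    exact closure_minimal hsub hcl hx'
  have hbdd : ∀ x y : M, BddBelow ((fun p : M × M => dist p.1 p.2) ''
      (closure (MulAction.orbit G x) ×ˢ closure (MulAction.orbit G y))) := by
    intro x y
    refine ⟨0, ?_⟩
    rintro b ⟨p, _, rfl⟩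
    exact dist_nonneg
  have hq1 : ∀ x y : M,
      ‖(∫ g, T g (δ x) ∂μ) - ∫ g, T g (δ y) ∂μ‖ ≤ dist (q x) (q y) := by
    intro x y
    rw [hdist]
    apply le_csInf
    · exact ⟨dist x y, ⟨(x, y), ⟨subset_closure (MulAction.mem_orbit_self x),
        subset_closure (MulAction.mem_orbit_self y)⟩, rfl⟩⟩
    · rintro b ⟨⟨x', y'⟩, ⟨hx', hy'⟩, rfl⟩
      rw [← hclos x x' hx', ← hclos y y' hy']
      exact hLip x' y'
  have hqLip : ∀ x y : M, dist (q x) (q y) ≤ dist x y := by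
    intro x y
    rw [hdist]
    exact csInf_le (hbdd x y) ⟨(x, y), ⟨subset_closure (MulAction.mem_orbit_self x),
      subset_closure (MulAction.mem_orbit_self y)⟩, rfl⟩
  have hqg : ∀ (g : G) (x : M), q (g • x) = q x := by
    intro g x
    have h0 : dist (q (g • x)) (q x) ≤ 0 := by
      rw [hdist]
      have hm : ((g • x : M), (g • x : M)) ∈
          closure (MulAction.orbit G (g • x)) ×ˢ closure (MulAction.orbit G x) :=
        ⟨subset_closure (MulAction.mem_orbit_self _), subset_closure (MulAction.mem_orbit x g)⟩
      simpa using csInf_le (hbdd _ _) ⟨((g • x : M), (g • x : M)), hm, rfl⟩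
    exact dist_le_zero.mp h0
  have hqeq : ∀ x y : M, q x = q y → (∫ g, T g (δ x) ∂μ) = ∫ g, T g (δ y) ∂μ := by
    intro x y hxy
    have h := hq1 x y
    rw [hxy, dist_self] at h
    have h0 : (∫ g, T g (δ x) ∂μ) - ∫ g, T g (δ y) ∂μ = 0 := norm_le_zero_iff.mp h
    exact sub_eq_zero.mp h0
  -- the induced map on the quotient
  set Φ : N → V := fun n => ∫ g, T g (δ (Classical.choose (hq n))) ∂μ with hΦdef
  have hΦ : ∀ x : M, Φ (q x) = ∫ g, T g (δ x) ∂μ := fun x =>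
    hqeq _ _ (Classical.choose_spec (hq (q x)))
  have hΦLip : ∀ n n' : N, ‖Φ n - Φ n'‖ ≤ dist n n' := by
    intro n n'
    obtain ⟨x, rfl⟩ := hq n
    obtain ⟨y, rfl⟩ := hq n'
    rw [hΦ, hΦ]
    exact hq1 x y
  have hΦ0 : Φ (q base) = 0 := by
    rw [hΦ]
    simp [hδ0]
  -- transfer of dual functionals, `V* → W*`
  have dual1 : ∀ f : V →L[ℝ] ℝ, ∃ f' : W →L[ℝ] ℝ, ‖f'‖ ≤ ‖f‖ ∧
      ∀ n : N, f' (δ' n) = f (Φ n) := by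
    intro f
    have hlip : LipschitzWith ‖f‖₊ fun n => f (Φ n) := by
      apply LipschitzWith.of_dist_le_mul
      intro n n'
      rw [dist_eq_norm, ← map_sub, coe_nnnorm]
      calc ‖f (Φ n - Φ n')‖ ≤ ‖f‖ * ‖Φ n - Φ n'‖ := f.le_opNorm _
      _ ≤ ‖f‖ * dist n n' := mul_le_mul_of_nonneg_left (hΦLip n n') (norm_nonneg f)
    obtain ⟨f', hf'n, hf'⟩ := hδ'univ ‖f‖₊ _ hlip (by rw [hΦ0, map_zero])
    exact ⟨f', by simpa using hf'n, hf'⟩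
  -- transfer of dual functionals, `W* → V*`
  have dual2 : ∀ f' : W →L[ℝ] ℝ, ∃ f : V →L[ℝ] ℝ, ‖f‖ ≤ ‖f'‖ ∧
      ∀ n : N, f (Φ n) = f' (δ' n) := by
    intro f'
    have hlip : LipschitzWith ‖f'‖₊ fun m : M => f' (δ' (q m)) := by
      apply LipschitzWith.of_dist_le_mul
      intro x y
      rw [dist_eq_norm, ← map_sub, coe_nnnorm]
      calc ‖f' (δ' (q x) - δ' (q y))‖ ≤ ‖f'‖ * ‖δ' (q x) - δ' (q y)‖ := f'.le_opNorm _
      _ = ‖f'‖ * dist (q x) (q y) := by rw [← dist_eq_norm, hδ'iso.dist_eq]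
      _ ≤ ‖f'‖ * dist x y := mul_le_mul_of_nonneg_left (hqLip x y) (norm_nonneg _)
    obtain ⟨f, hfn, hf⟩ := hδuniv ‖f'‖₊ _ hlip (by rw [hδ'0, map_zero])
    refine ⟨f, by simpa using hfn, ?_⟩
    intro n
    obtain ⟨x, rfl⟩ := hq n
    rw [hΦ]
    calc f (∫ g, T g (δ x) ∂μ) = ∫ g, f (T g (δ x)) ∂μ :=
          (ContinuousLinearMap.integral_comp_comm f (hInt _)).symm
    _ = ∫ _, f' (δ' (q x)) ∂μ := by
        simp_rw [hT, map_sub, hf, hqg, hδ'0, map_zero, sub_zero]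
    _ = f' (δ' (q x)) := by simp
  -- the two linear combinations
  set S : (N →₀ ℝ) →ₗ[ℝ] W := Finsupp.linearCombination ℝ δ' with hSdef
  set U : (N →₀ ℝ) →ₗ[ℝ] V := Finsupp.linearCombination ℝ Φ with hUdef
  have hfU : ∀ (f : V →L[ℝ] ℝ) (f' : W →L[ℝ] ℝ), (∀ n : N, f' (δ' n) = f (Φ n)) →
      ∀ c : N →₀ ℝ, f (U c) = f' (S c) := by
    intro f f' hff' c
    rw [hSdef, hUdef]
    simp only [Finsupp.linearCombination_apply]
    rw [map_finsuppSum, map_finsuppSum]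
    apply Finsupp.sum_congr
    intro n _
    rw [_root_.map_smul, _root_.map_smul, hff']
  have key : ∀ c : N →₀ ℝ, ‖U c‖ = ‖S c‖ := by
    intro c
    apply le_antisymm
    · apply NormedSpace.norm_le_dual_bound ℝ (U c) (norm_nonneg _)
      intro f
      rw [hfU f _ (dual1 f).choose_spec.2 c]
      calc ‖(dual1 f).choose (S c)‖ ≤ ‖(dual1 f).choose‖ * ‖S c‖ :=
            ((dual1 f).choose).le_opNorm _
      _ ≤ ‖f‖ * ‖S c‖ := mul_le_mul_of_nonneg_right (dual1 f).choose_spec.1 (norm_nonneg _)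
      _ = ‖S c‖ * ‖f‖ := mul_comm _ _
    · apply NormedSpace.norm_le_dual_bound ℝ (S c) (norm_nonneg _)
      intro f'
      rw [← hfU (dual2 f').choose f' (fun n => ((dual2 f').choose_spec.2 n).symm) c]
      calc ‖(dual2 f').choose (U c)‖ ≤ ‖(dual2 f').choose‖ * ‖U c‖ :=
            ((dual2 f').choose).le_opNorm _
      _ ≤ ‖f'‖ * ‖U c‖ := mul_le_mul_of_nonneg_right (dual2 f').choose_spec.1 (norm_nonneg _)
      _ = ‖U c‖ * ‖f'‖ := mul_comm _ _
  have wd : ∀ c c' : N →₀ ℝ, S c = S c' → U c = U c' := by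
    intro c c' h
    have h0 := key (c - c')
    rw [map_sub, map_sub, h, sub_self, norm_zero, norm_eq_zero] at h0
    exact sub_eq_zero.mp h0
  -- construct the isometric embedding on the dense subspace
  set E : Submodule ℝ W := Submodule.span ℝ (Set.range δ') with hEdef
  have hrep : ∀ w : E, ∃ c : N →₀ ℝ, S c = (w : W) := by
    intro w
    have hw : (w : W) ∈ Submodule.span ℝ (Set.range δ') := w.2
    rw [Finsupp.mem_span_range_iff_exists_finsupp] at hw
    obtain ⟨c, hc⟩ := hw
    exact ⟨c, by rw [hSdef, Finsupp.linearCombination_apply]; exact hc⟩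
  choose rep hrepS using hrep
  have hUadd : ∀ w₁ w₂ : E, U (rep (w₁ + w₂)) = U (rep w₁) + U (rep w₂) := by
    intro w₁ w₂
    rw [← map_add]
    apply wd
    rw [hrepS, map_add, hrepS, hrepS, Submodule.coe_add]
  have hUsmul : ∀ (a : ℝ) (w : E), U (rep (a • w)) = a • U (rep w) := by
    intro a w
    rw [← _root_.map_smul]
    apply wd
    rw [hrepS, _root_.map_smul, hrepS, Submodule.coe_smul]
  let f0 : E →ₗ[ℝ] V :=
    { toFun := fun w => U (rep w)
      map_add' := hUadd
      map_smul' := hUsmul }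
  have hf0norm : ∀ w : E, ‖f0 w‖ = ‖w‖ := by
    intro w
    show ‖U (rep w)‖ = ‖w‖
    rw [key, hrepS]
    rfl
  let f0L : E →L[ℝ] V := f0.mkContinuous 1 (fun w => by rw [hf0norm, one_mul])
  let e : E →L[ℝ] W := E.subtypeL
  have hedense : DenseRange e := by
    have h : Dense (E : Set W) := hδ'dense
    exact h.denseRange_val
  have heui : IsUniformInducing e := by
    have : Isometry (fun w : E => (w : W)) := fun a b => rfl
    exact this.isUniformInducing
  let J0 : W →L[ℝ] V := f0L.extend e
  have hJ0e : ∀ w : E, J0 (w : W) = U (rep w) := fun w =>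
    ContinuousLinearMap.extend_eq f0L (e := e) hedense heui w
  have hJ0norm : ∀ w : W, ‖J0 w‖ = ‖w‖ := by
    have hclosed : IsClosed {w : W | ‖J0 w‖ = ‖w‖} :=
      isClosed_eq (continuous_norm.comp J0.continuous) continuous_norm
    have hsub : (E : Set W) ⊆ {w : W | ‖J0 w‖ = ‖w‖} := by
      intro w hw
      have h1 : J0 ((⟨w, hw⟩ : E) : W) = U (rep ⟨w, hw⟩) := hJ0e ⟨w, hw⟩
      have h2 : ‖U (rep (⟨w, hw⟩ : E))‖ = ‖w‖ := by rw [key, hrepS]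
      show ‖J0 w‖ = ‖w‖
      rw [show (w : W) = ((⟨w, hw⟩ : E) : W) from rfl, h1, h2]
    have hcl : closure (E : Set W) ⊆ {w : W | ‖J0 w‖ = ‖w‖} := closure_minimal hsub hclosed
    intro w
    exact hcl (by rw [hδ'dense.closure_eq]; trivial)
  -- value of `J0` on `δ'`
  have hJδ' : ∀ n : N, J0 (δ' n) = Φ n := by
    intro n
    have hmem : δ' n ∈ E := Submodule.subset_span (Set.mem_range_self n)
    have h1 : J0 (δ' n) = U (rep ⟨δ' n, hmem⟩) := hJ0e ⟨δ' n, hmem⟩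
    rw [h1]
    have h2 : S (rep ⟨δ' n, hmem⟩) = S (Finsupp.single n 1) := by
      rw [hrepS, hSdef]
      simp [Finsupp.linearCombination_single]
    rw [wd _ _ h2, hUdef]
    simp [Finsupp.linearCombination_single]
  have hJmain : ∀ x : M, J0 (δ' (q x)) = ∫ g, T g (δ x) ∂μ := by
    intro x
    rw [hJδ', hΦ]
  -- `Rm` fixes `Φ`
  have hRΦ : ∀ n : N, (∫ g, T g (Φ n) ∂μ) = Φ n := by
    intro n
    obtain ⟨x, rfl⟩ := hq n
    rw [hΦ]
    exact hRidem (δ x)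
  -- range of `J0` equals range of `Rm`
  have hfix : ∀ w : W, (∫ g, T g (J0 w) ∂μ) = J0 w := by
    have hcl : IsClosed {w : W | RmL (J0 w) = J0 w} :=
      isClosed_eq (RmL.continuous.comp J0.continuous) J0.continuous
    have hsubgen : Set.range δ' ⊆ {w : W | RmL (J0 w) = J0 w} := by
      rintro _ ⟨n, rfl⟩
      show RmL (J0 (δ' n)) = J0 (δ' n)
      rw [hJδ', hRmL, hRΦ]
    have hsubspan : (E : Set W) ⊆ {w : W | RmL (J0 w) = J0 w} := by
      intro w hw
      induction hw using Submodule.span_induction with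
      | mem x hx => exact hsubgen hx
      | zero => show RmL (J0 0) = J0 0; rw [map_zero, map_zero]
      | add x y _ _ hx hy =>
        have hx' : RmL (J0 x) = J0 x := hx
        have hy' : RmL (J0 y) = J0 y := hy
        show RmL (J0 (x + y)) = J0 (x + y)
        rw [map_add, map_add, hx', hy']
      | smul a x _ hx =>
        have hx' : RmL (J0 x) = J0 x := hx
        show RmL (J0 (a • x)) = J0 (a • x)
        rw [_root_.map_smul, _root_.map_smul, hx']
    have hall : ∀ w : W, RmL (J0 w) = J0 w := by
      intro w
      have hcls : closure (E : Set W) ⊆ {w : W | RmL (J0 w) = J0 w} :=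
        closure_minimal hsubspan hcl
      exact hcls (by rw [hδ'dense.closure_eq]; trivial)
    intro w
    have := hall w
    rwa [hRmL] at this
  have hrangesub : ∀ v : V, v ∈ Submodule.span ℝ (Set.range δ) →
      RmL v ∈ Set.range (J0 : W → V) := by
    intro v hv
    induction hv using Submodule.span_induction with
    | mem x hx =>
      obtain ⟨m, rfl⟩ := hx
      exact ⟨δ' (q m), by rw [hJmain, hRmL]⟩
    | zero => exact ⟨0, by rw [map_zero, map_zero]⟩
    | add x y _ _ hx hy =>
      obtain ⟨a, ha⟩ := hx
      obtain ⟨b, hb⟩ := hy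
      exact ⟨a + b, by rw [map_add, map_add, ha, hb]⟩
    | smul a x _ hx =>
      obtain ⟨b, hb⟩ := hx
      exact ⟨a • b, by rw [_root_.map_smul, _root_.map_smul, hb]⟩
  have hJ0iso : Isometry (J0 : W → V) :=
    AddMonoidHomClass.isometry_of_norm J0 hJ0norm
  have hrangeclosed : IsClosed (Set.range (J0 : W → V)) :=
    hJ0iso.isClosedEmbedding.isClosed_range
  have hrange : Set.range (J0 : W → V) = Set.range (fun v : V => ∫ g, T g v ∂μ) := by
    apply Set.Subset.antisymm
    · rintro _ ⟨w, rfl⟩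
      exact ⟨J0 w, hfix w⟩
    · rintro _ ⟨v, rfl⟩
      show (∫ g, T g v ∂μ) ∈ Set.range (J0 : W → V)
      have hv : v ∈ closure (Submodule.span ℝ (Set.range δ) : Set V) := by
        rw [hδdense.closure_eq]; trivial
      have h1 : RmL v ∈ RmL '' closure (Submodule.span ℝ (Set.range δ) : Set V) :=
        ⟨v, hv, rfl⟩
      have h2 : RmL '' closure (Submodule.span ℝ (Set.range δ) : Set V) ⊆
          closure (RmL '' (Submodule.span ℝ (Set.range δ) : Set V)) :=
        image_closure_subset_closure_image RmL.continuous
      have h3 : RmL '' (Submodule.span ℝ (Set.range δ) : Set V) ⊆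
          Set.range (J0 : W → V) := by
        rintro _ ⟨u, hu, rfl⟩
        exact hrangesub u hu
      have h4 : closure (RmL '' (Submodule.span ℝ (Set.range δ) : Set V)) ⊆
          Set.range (J0 : W → V) := closure_minimal h3 hrangeclosed
      have h5 : RmL v ∈ Set.range (J0 : W → V) := h4 (h2 h1)
      rwa [hRmL] at h5
  -- assemble
  refine ⟨hRadd, hRsmul, hRnorm, hRidem, ⟨J0, hJ0norm⟩, hJmain, hrange⟩
end

section
/- Let G be a compact group acting continuously by isometries on a proper, purely 1-unrectifiable metric space M. Then the orbit space M/G (orbit closures with the quotient metric) is purely 1-unrectifiable. -/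
open scoped NNReal
open scoped ENNReal

/-- A metric space is purely 1-unrectifiable if every Lipschitz image (from a subset of `ℝ`)
has vanishing 1-dimensional Hausdorff measure. -/
def PurelyOneUnrectifiable (M : Type*) [MetricSpace M] : Prop :=
  letI : MeasurableSpace M := borel M
  haveI : BorelSpace M := ⟨rfl⟩
  ∀ (A : Set ℝ) (f : ℝ → M) (K : ℝ≥0), LipschitzOnWith K f A →
    MeasureTheory.Measure.hausdorffMeasure (X := M) 1 (f '' A) = 0

/-- Let `G` be a compact group acting continuously by isometries on a proper, purely
1-unrectifiable metric space `M`.  Then the orbit space `M/G` (orbit closures with the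
quotient metric, realized by a surjection `q : M → N` satisfying the quotient-distance
formula) is purely 1-unrectifiable. -/
theorem stmt_19 {M : Type*} [MetricSpace M] [ProperSpace M]
    {G : Type*} [Group G] [TopologicalSpace G] [IsTopologicalGroup G] [CompactSpace G]
    [MulAction G M]
    (hisoM : ∀ g : G, Isometry (fun x : M => g • x))
    (hcontM : Continuous fun p : G × M => p.1 • p.2)
    (hM : PurelyOneUnrectifiable M)
    {N : Type*} [MetricSpace N] (q : M → N) (hq : Function.Surjective q)
    (hdist : ∀ x y : M, dist (q x) (q y) = sInf ((fun p : M × M => dist p.1 p.2) ''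
        (closure (MulAction.orbit G x) ×ˢ closure (MulAction.orbit G y)))) :
    PurelyOneUnrectifiable N := by
  classical
  intro A f K hf
  -- compactness of orbits
  have horbc : ∀ x : M, IsCompact (MulAction.orbit G x) := by
    intro x
    have : Continuous fun g : G => g • x :=
      hcontM.comp (continuous_id.prodMk continuous_const)
    exact isCompact_range this
  have horbcl : ∀ x : M, closure (MulAction.orbit G x) = MulAction.orbit G x :=
    fun x => (horbc x).isClosed.closure_eq
  have hdist' : ∀ x y : M, dist (q x) (q y) = sInf ((fun p : M × M => dist p.1 p.2) ''
      (MulAction.orbit G x ×ˢ MulAction.orbit G y)) := by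
    intro x y; rw [hdist, horbcl, horbcl]
  -- the infimum is attained
  have hmin : ∀ x y : M, ∃ p : M × M, p.1 ∈ MulAction.orbit G x ∧ p.2 ∈ MulAction.orbit G y ∧
      dist (q x) (q y) = dist p.1 p.2 := by
    intro x y
    have hcp : IsCompact (MulAction.orbit G x ×ˢ MulAction.orbit G y) :=
      (horbc x).prod (horbc y)
    have hne : (MulAction.orbit G x ×ˢ MulAction.orbit G y).Nonempty :=
      ⟨(x, y), MulAction.mem_orbit_self x, MulAction.mem_orbit_self y⟩
    obtain ⟨p, hp, hpmin⟩ := hcp.exists_isMinOn hne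
      (continuous_dist.continuousOn : ContinuousOn (fun p : M × M => dist p.1 p.2) _)
    refine ⟨p, hp.1, hp.2, ?_⟩
    rw [hdist' x y]
    exact IsLeast.csInf_eq ⟨Set.mem_image_of_mem _ hp, fun r hr => by
      obtain ⟨p', hp', rfl⟩ := hr; exact hpmin hp'⟩
  -- q is 1-Lipschitz
  have hq1 : LipschitzWith 1 q := by
    refine LipschitzWith.of_dist_le_mul fun x y => ?_
    rw [NNReal.coe_one, one_mul, hdist' x y]
    have hbdd : BddBelow ((fun p : M × M => dist p.1 p.2) ''
        (MulAction.orbit G x ×ˢ MulAction.orbit G y)) := by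
      exact ⟨0, fun r hr => by obtain ⟨p, -, rfl⟩ := hr; exact dist_nonneg⟩
    exact csInf_le hbdd (Set.mem_image_of_mem _
      (Set.mk_mem_prod (MulAction.mem_orbit_self x) (MulAction.mem_orbit_self y)))
  -- q is constant on orbits
  have hqorb : ∀ (x : M) (g : G), q (g • x) = q x := by
    intro x g
    have h0 : dist (q (g • x)) (q x) ≤ 0 := by
      rw [hdist' (g • x) x]
      have hbdd : BddBelow ((fun p : M × M => dist p.1 p.2) ''
          (MulAction.orbit G (g • x) ×ˢ MulAction.orbit G x)) := by
        exact ⟨0, fun r hr => by obtain ⟨p, -, rfl⟩ := hr; exact dist_nonneg⟩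
      exact csInf_le hbdd ⟨(g • x, g • x),
        Set.mk_mem_prod (MulAction.mem_orbit_self _) (MulAction.mem_orbit _ g), dist_self _⟩
    exact dist_le_zero.mp h0
  have hqorb' : ∀ x y : M, y ∈ MulAction.orbit G x → q y = q x := by
    rintro x y ⟨g, rfl⟩; exact hqorb x g
  -- distance-realizing lift
  have hlift : ∀ x y : M, ∃ y', y' ∈ MulAction.orbit G y ∧ dist x y' = dist (q x) (q y) := by
    intro x y
    obtain ⟨⟨x', y'⟩, ⟨g, rfl⟩, hy', hd⟩ := hmin x y
    refine ⟨g⁻¹ • y', ?_, ?_⟩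
    · obtain ⟨h, rfl⟩ := hy'; exact ⟨g⁻¹ * h, (mul_smul _ _ _)⟩
    · have hiso := (hisoM g).dist_eq x (g⁻¹ • y')
      simp only [smul_inv_smul] at hiso
      rw [hd, hiso]
  -- chain lifts on finite subsets of A
  have hKnn : (0:ℝ) ≤ (K:ℝ) := K.coe_nonneg
  have chain : ∀ S : Finset ℝ, ↑S ⊆ A → ∃ F : ℝ → M,
      (∀ t ∈ S, q (F t) = f t) ∧ ∀ s ∈ S, ∀ t ∈ S, dist (F s) (F t) ≤ K * dist s t := by
    intro S
    induction S using Finset.induction_on_max with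
    | empty =>
      intro _
      obtain ⟨x0, -⟩ := hq (f 0)
      exact ⟨fun _ => x0, by simp, by simp⟩
    | insert a S hlt ih =>
      intro hsub
      have ha : a ∈ A := hsub (by simp)
      have hS : ↑S ⊆ A := fun t ht => hsub (by simp [ht])
      obtain ⟨F, hF1, hF2⟩ := ih hS
      rcases S.eq_empty_or_nonempty with rfl | hne
      · obtain ⟨xa, hxa⟩ := hq (f a)
        refine ⟨fun _ => xa, ?_, ?_⟩
        · intro t ht; simp only [Finset.mem_insert, Finset.notMem_empty, or_false] at ht
          subst ht; exact hxa
        · intro s hs t ht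
          simp only [Finset.mem_insert, Finset.notMem_empty, or_false] at hs ht
          subst hs; subst ht; simp [dist_self]
      · set m := S.max' hne with hm
        have hmS : m ∈ S := S.max'_mem hne
        obtain ⟨xa, hxa⟩ := hq (f a)
        obtain ⟨y', hy'orb, hy'd⟩ := hlift (F m) xa
        have hqy' : q y' = f a := by rw [hqorb' xa y' hy'orb, hxa]
        have hdm : dist (F m) y' ≤ K * dist m a := by
          rw [hy'd, hF1 m hmS, hxa]
          exact hf.dist_le_mul m (hS (by simpa using hmS)) a ha
        refine ⟨Function.update F a y', ?_, ?_⟩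
        · intro t ht
          rcases Finset.mem_insert.mp ht with rfl | htS
          · rw [Function.update_self]; exact hqy'
          · rw [Function.update_of_ne (ne_of_lt (hlt t htS))]; exact hF1 t htS
        · have key : ∀ s ∈ S, dist (F s) y' ≤ K * dist s a := by
            intro s hs
            have h1 : dist (F s) (F m) ≤ K * dist s m := hF2 s hs m hmS
            have hsm : s ≤ m := S.le_max' s hs
            have hma : m < a := hlt m hmS
            have hsa : s < a := lt_of_le_of_lt hsm hma
            calc dist (F s) y' ≤ dist (F s) (F m) + dist (F m) y' := dist_triangle _ _ _
              _ ≤ K * dist s m + K * dist m a := add_le_add h1 hdm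
              _ = K * (dist s m + dist m a) := by ring
              _ = K * dist s a := by
                  rw [Real.dist_eq, Real.dist_eq, Real.dist_eq,
                    abs_of_nonpos (by linarith), abs_of_nonpos (by linarith),
                    abs_of_nonpos (by linarith)]
                  ring_nf
          intro s hs t ht
          rcases Finset.mem_insert.mp hs with rfl | hsS <;>
            rcases Finset.mem_insert.mp ht with h' | htS
          · subst h'; simp [dist_self]
          · have htn : t ≠ s := ne_of_lt (hlt t htS)
            rw [Function.update_self, Function.update_of_ne htn]
            calc dist y' (F t) = dist (F t) y' := dist_comm _ _
              _ ≤ K * dist t s := key t htS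
              _ = K * dist s t := by rw [dist_comm t s]
          · subst h'
            have hsn : s ≠ t := ne_of_lt (hlt s hsS)
            rw [Function.update_self, Function.update_of_ne hsn]
            exact key s hsS
          · have hsn : s ≠ a := ne_of_lt (hlt s hsS)
            have htn : t ≠ a := ne_of_lt (hlt t htS)
            rw [Function.update_of_ne hsn, Function.update_of_ne htn]
            exact hF2 s hsS t htS
  choose Φ hΦ1 hΦ2 using chain
  -- ultrafilter limit
  obtain ⟨x0, -⟩ := hq (f 0)
  let Ψ : Finset ℝ → ℝ → M := fun S => Φ (S.filter (· ∈ A)) (fun t ht => by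
    simp only [Finset.coe_filter, Set.mem_setOf_eq] at ht; exact ht.2)
  have hΨ1 : ∀ S : Finset ℝ, ∀ t ∈ S, t ∈ A → q (Ψ S t) = f t := by
    intro S t ht htA
    exact hΦ1 _ _ t (Finset.mem_filter.mpr ⟨ht, htA⟩)
  have hΨ2 : ∀ S : Finset ℝ, ∀ s ∈ S, s ∈ A → ∀ t ∈ S, t ∈ A →
      dist (Ψ S s) (Ψ S t) ≤ K * dist s t := by
    intro S s hs hsA t ht htA
    exact hΦ2 _ _ s (Finset.mem_filter.mpr ⟨hs, hsA⟩) t (Finset.mem_filter.mpr ⟨ht, htA⟩)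
  let U : Ultrafilter (Finset ℝ) := Ultrafilter.of Filter.atTop
  have hU : ↑U ≤ (Filter.atTop : Filter (Finset ℝ)) := Ultrafilter.of_le _
  have hev : ∀ t : ℝ, ∀ᶠ S : Finset ℝ in U, t ∈ S := by
    intro t
    exact hU (Filter.eventually_atTop.mpr ⟨{t}, fun S hS => hS (Finset.mem_singleton_self t)⟩)
  -- pointwise limits exist in compact fibers
  have hfib : ∀ t : ℝ, t ∈ A → ∃ z : M, Filter.Tendsto (fun S => Ψ S t) U (nhds z) := by
    intro t htA
    obtain ⟨xt, hxt⟩ := hq (f t)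
    have hevC : ∀ᶠ S : Finset ℝ in U, Ψ S t ∈ MulAction.orbit G xt := by
      filter_upwards [hev t] with S hS
      have hqv : q (Ψ S t) = q xt := by rw [hΨ1 S t hS htA, hxt]
      -- fibers are orbits
      have h0 : dist (q (Ψ S t)) (q xt) = 0 := by rw [hqv, dist_self]
      obtain ⟨y', hy'orb, hy'd⟩ := hlift (Ψ S t) xt
      have : dist (Ψ S t) y' = 0 := by rw [hy'd, h0]
      have hy'eq : y' = Ψ S t := (dist_eq_zero.mp this).symm
      rw [← hy'eq]; exact hy'orb
    have hle : (U.map (fun S => Ψ S t) : Filter M) ≤ Filter.principal (MulAction.orbit G xt) :=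
      Filter.le_principal_iff.mpr hevC
    obtain ⟨z, -, hz⟩ := (horbc xt).ultrafilter_le_nhds (U.map (fun S => Ψ S t)) hle
    exact ⟨z, hz⟩
  haveI : Nonempty M := ⟨x0⟩
  choose! F hF using hfib
  -- F is a Lipschitz lift of f on A
  have hqF : ∀ t ∈ A, q (F t) = f t := by
    intro t htA
    have h1 : Filter.Tendsto (fun S => q (Ψ S t)) U (nhds (q (F t))) :=
      (hq1.continuous.tendsto _).comp (hF t htA)
    have h2 : Filter.Tendsto (fun S => q (Ψ S t)) U (nhds (f t)) := by
      refine Filter.Tendsto.congr' ?_ tendsto_const_nhds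
      filter_upwards [hev t] with S hS
      exact (hΨ1 S t hS htA).symm
    exact tendsto_nhds_unique h1 h2
  have hFlip : ∀ s ∈ A, ∀ t ∈ A, dist (F s) (F t) ≤ K * dist s t := by
    intro s hsA t htA
    have h1 : Filter.Tendsto (fun S => dist (Ψ S s) (Ψ S t)) U (nhds (dist (F s) (F t))) :=
      (hF s hsA).dist (hF t htA)
    refine le_of_tendsto h1 ?_
    filter_upwards [hev s, hev t] with S hSs hSt
    exact hΨ2 S s hSs hsA t hSt htA
  have hFLip : LipschitzOnWith K F A := by
    refine LipschitzOnWith.of_dist_le_mul fun x hx y hy => hFlip x hx y hy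
  -- conclude
  letI : MeasurableSpace M := borel M
  haveI : BorelSpace M := ⟨rfl⟩
  letI : MeasurableSpace N := borel N
  haveI : BorelSpace N := ⟨rfl⟩
  have h0 : MeasureTheory.Measure.hausdorffMeasure (X := M) 1 (F '' A) = 0 := hM A F K hFLip
  have himg : f '' A = q '' (F '' A) := by
    rw [Set.image_image]
    exact Set.image_congr fun t ht => (hqF t ht).symm
  have hle2 := hq1.hausdorffMeasure_image_le (d := 1) zero_le_one (F '' A)
  rw [himg]
  refine le_antisymm ?_ (by positivity)
  calc MeasureTheory.Measure.hausdorffMeasure (X := N) 1 (q '' (F '' A))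
      ≤ ((1:ℝ≥0) : ℝ≥0∞) ^ (1:ℝ) * MeasureTheory.Measure.hausdorffMeasure (X := M) 1 (F '' A) := hle2
    _ = 0 := by rw [h0, mul_zero]
end
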